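/- Let L be a field of characteristic zero, A a commutative L-algebra, Ω = Ω_{A/L} the module of Kähler differentials with universal derivation d : A → Ω. Suppose α_1, …, α_m ∈ Ω are elements such that every ω ∈ Ω can be written as an L-linear combination of α_1, …, α_m plus an exact form da for some a ∈ A. Then for every r ≥ 1 and every strictly upper-triangular r×r matrix ω with entries in Ω, there exists an upper-triangular unipotent matrix G ∈ GL_r(A) such that the gauge-transformed matrix G⁻¹ωG + G⁻¹dG is strictly upper-triangular with every entry lying in the L-linear span of α_1, …, α_m (here dG denotes the matrix obtained from G by applying d entrywise, and matrix products use the A-module structure of Ω). -/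
import Mathlib



section Aux
variable {L A : Type*} [Field L] [CharZero L] [CommRing A] [Algebra L A] {r : ℕ}

local notation "Ω" => KaehlerDifferential L A
local notation "dd" => KaehlerDifferential.D L A

/-- `M • X` : matrix over `A` times matrix over `Ω`. -/
noncomputable def mulAM (M : Matrix (Fin r) (Fin r) A) (X : Matrix (Fin r) (Fin r) Ω) :
    Matrix (Fin r) (Fin r) Ω := fun i j => ∑ k, M i k • X k j

/-- `X • M` : matrix over `Ω` times matrix over `A`. -/
noncomputable def mulMA (X : Matrix (Fin r) (Fin r) Ω) (M : Matrix (Fin r) (Fin r) A) :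
    Matrix (Fin r) (Fin r) Ω := fun i j => ∑ k, M k j • X i k

/-- entrywise derivative of a matrix. -/
noncomputable def dM (G : Matrix (Fin r) (Fin r) A) : Matrix (Fin r) (Fin r) Ω :=
  fun i j => dd (G i j)

omit [CharZero L] in
lemma mulAM_add (M : Matrix (Fin r) (Fin r) A) (X Y : Matrix (Fin r) (Fin r) Ω) :
    mulAM M (X + Y) = mulAM M X + mulAM M Y := by
  funext i j; simp [mulAM, smul_add, Finset.sum_add_distrib]

omit [CharZero L] in
lemma mulMA_add (X Y : Matrix (Fin r) (Fin r) Ω) (M : Matrix (Fin r) (Fin r) A) :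
    mulMA (X + Y) M = mulMA X M + mulMA Y M := by
  funext i j; simp [mulMA, smul_add, Finset.sum_add_distrib]

omit [CharZero L] in
lemma mulAM_one (X : Matrix (Fin r) (Fin r) Ω) : mulAM 1 X = X := by
  funext i j; simp [mulAM, Matrix.one_apply, ite_smul, Finset.sum_ite_eq]

omit [CharZero L] in
lemma mulMA_one (X : Matrix (Fin r) (Fin r) Ω) : mulMA X 1 = X := by
  funext i j; simp [mulMA, Matrix.one_apply, ite_smul, Finset.sum_ite_eq']

omit [CharZero L] in
lemma mulAM_mul (M N : Matrix (Fin r) (Fin r) A) (X : Matrix (Fin r) (Fin r) Ω) :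
    mulAM (M * N) X = mulAM M (mulAM N X) := by
  funext i j
  simp only [mulAM, Matrix.mul_apply, Finset.sum_smul, Finset.smul_sum, smul_smul]
  rw [Finset.sum_comm]

omit [CharZero L] in
lemma mulMA_mul (X : Matrix (Fin r) (Fin r) Ω) (M N : Matrix (Fin r) (Fin r) A) :
    mulMA X (M * N) = mulMA (mulMA X M) N := by
  funext i j
  simp only [mulMA, Matrix.mul_apply, Finset.sum_smul, Finset.smul_sum, smul_smul]
  rw [Finset.sum_comm]
  apply Finset.sum_congr rfl; intro k _
  apply Finset.sum_congr rfl; intro l _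
  rw [mul_comm]

omit [CharZero L] in
lemma mulAM_mulMA (M N : Matrix (Fin r) (Fin r) A) (X : Matrix (Fin r) (Fin r) Ω) :
    mulAM M (mulMA X N) = mulMA (mulAM M X) N := by
  funext i j
  simp only [mulAM, mulMA, Finset.smul_sum, smul_smul]
  rw [Finset.sum_comm]
  apply Finset.sum_congr rfl; intro k _
  apply Finset.sum_congr rfl; intro l _
  rw [mul_comm]

omit [CharZero L] in
lemma dM_mul (M N : Matrix (Fin r) (Fin r) A) :
    dM (M * N) = (mulAM M (dM N) + mulMA (dM M) N : Matrix (Fin r) (Fin r) Ω) := by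
  funext i j
  simp [dM, mulAM, mulMA, Matrix.mul_apply, map_sum, Derivation.leibniz,
    Finset.sum_add_distrib]

/-- Gauge transform `G⁻¹ωG + G⁻¹dG`. -/
noncomputable def gaugeT (G Ginv : Matrix (Fin r) (Fin r) A)
    (ω : Matrix (Fin r) (Fin r) Ω) : Matrix (Fin r) (Fin r) Ω :=
  mulAM Ginv (mulMA ω G) + mulAM Ginv (dM G)

omit [CharZero L] in
lemma gaugeT_apply (G Ginv : Matrix (Fin r) (Fin r) A)
    (ω : Matrix (Fin r) (Fin r) Ω) (i j : Fin r) :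
    gaugeT G Ginv ω i j = (∑ k, ∑ l, (Ginv i k * G l j) • ω k l) +
      ∑ k, Ginv i k • dd (G k j) := by
  simp only [gaugeT, Matrix.add_apply, mulAM, mulMA, dM, Finset.smul_sum, smul_smul]

omit [CharZero L] in
lemma gaugeT_one (ω : Matrix (Fin r) (Fin r) Ω) : gaugeT 1 1 ω = ω := by
  simp [gaugeT, mulAM_one, mulMA_one, dM]
  funext i j
  simp [dM, Matrix.one_apply, apply_ite]

omit [CharZero L] in
lemma gaugeT_comp (G₁ Ginv₁ G₂ Ginv₂ : Matrix (Fin r) (Fin r) A)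
    (h : Ginv₁ * G₁ = 1) (ω : Matrix (Fin r) (Fin r) Ω) :
    gaugeT (G₁ * G₂) (Ginv₂ * Ginv₁) ω = gaugeT G₂ Ginv₂ (gaugeT G₁ Ginv₁ ω) := by
  have collapse : ∀ X : Matrix (Fin r) (Fin r) Ω, mulAM Ginv₁ (mulAM G₁ X) = X := by
    intro X; rw [← mulAM_mul, h, mulAM_one]
  simp only [gaugeT, mulAM_add, mulMA_add, mulAM_mulMA, ← mulAM_mul, dM_mul,
    mulAM_add]
  rw [Matrix.mul_assoc Ginv₂ Ginv₁ G₁, h, Matrix.mul_one, mulMA_mul]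
  abel

end Aux

section Aux2
variable {L A : Type*} [Field L] [CommRing A] [Algebra L A] {r : ℕ}

local notation "Ω" => KaehlerDifferential L A
local notation "dd" => KaehlerDifferential.D L A

lemma pow_diag_zero (N : Matrix (Fin r) (Fin r) A) (e : ℕ)
    (hN : ∀ i j : Fin r, (j : ℕ) ≠ (i : ℕ) + e → N i j = 0) :
    ∀ t : ℕ, ∀ i j : Fin r, (j : ℕ) ≠ (i : ℕ) + t * e → (N ^ t) i j = 0 := by
  intro t
  induction t with
  | zero =>
    intro i j hj
    simp only [pow_zero]
    exact Matrix.one_apply_ne' (by intro h; apply hj; rw [h]; simp)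
  | succ t ih =>
    intro i j hj
    rw [pow_succ, Matrix.mul_apply]
    apply Finset.sum_eq_zero
    intro k _
    by_cases hk : (k : ℕ) = (i : ℕ) + t * e
    · have : (j : ℕ) ≠ (k : ℕ) + e := by
        rw [Nat.succ_mul] at hj; omega
      rw [hN k j this, mul_zero]
    · rw [ih i k hk, zero_mul]

lemma pow_eq_zero_of_diag (N : Matrix (Fin r) (Fin r) A) (e : ℕ) (he : 1 ≤ e)
    (hN : ∀ i j : Fin r, (j : ℕ) ≠ (i : ℕ) + e → N i j = 0) : N ^ r = 0 := by
  funext i j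
  have hj : (j : ℕ) < r := j.isLt
  have : (j : ℕ) ≠ (i : ℕ) + r * e := by nlinarith [j.isLt]
  simpa using pow_diag_zero N e hN r i j this

lemma one_add_mul_geom (N : Matrix (Fin r) (Fin r) A) (hNr : N ^ r = 0) :
    (1 + N) * (∑ t ∈ Finset.range r, (-N) ^ t) = 1 ∧
      (∑ t ∈ Finset.range r, (-N) ^ t) * (1 + N) = 1 := by
  have hneg : (-N) ^ r = 0 := by
    rw [neg_pow, hNr, mul_zero]
  constructor
  · have := mul_geom_sum (-N) r
    rw [hneg] at this
    have h2 : (1 + N) = -((-N) - 1) := by rw [neg_sub, sub_neg_eq_add, add_comm]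
    rw [h2, neg_mul, this]; simp
  · have := geom_sum_mul (-N) r
    rw [hneg] at this
    have h2 : (1 + N) = -((-N) - 1) := by rw [neg_sub, sub_neg_eq_add, add_comm]
    rw [h2, mul_neg, this]; simp

lemma unip_mul_diag (G H : Matrix (Fin r) (Fin r) A)
    (hG1 : ∀ i, G i i = 1) (hG0 : ∀ i j, j < i → G i j = 0)
    (hH1 : ∀ i, H i i = 1) (hH0 : ∀ i j, j < i → H i j = 0) (i : Fin r) :
    (G * H) i i = 1 := by
  rw [Matrix.mul_apply]
  rw [Finset.sum_eq_single i]
  · rw [hG1, hH1, one_mul]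
  · intro k _ hk
    rcases lt_or_gt_of_ne hk with h | h
    · rw [hG0 i k h, zero_mul]
    · rw [hH0 k i h, mul_zero]
  · simp

lemma unip_mul_lower (G H : Matrix (Fin r) (Fin r) A)
    (hG0 : ∀ i j, j < i → G i j = 0) (hH0 : ∀ i j, j < i → H i j = 0)
    (i j : Fin r) (hij : j < i) : (G * H) i j = 0 := by
  rw [Matrix.mul_apply]
  apply Finset.sum_eq_zero
  intro k _
  by_cases hk : k < i
  · rw [hG0 i k hk, zero_mul]
  · have : j < k := lt_of_lt_of_le hij (not_lt.mp hk)
    rw [hH0 k j this, mul_zero]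

end Aux2

section Aux3
variable {L A : Type*} [Field L] [CommRing A] [Algebra L A] {r : ℕ}

local notation "Ω" => KaehlerDifferential L A
local notation "dd" => KaehlerDifferential.D L A

lemma step_lemma (m : ℕ) (α : Fin m → Ω)
    (hα : ∀ ω : Ω, ∃ c : Fin m → L, ∃ a : A,
      ω = (∑ i, algebraMap L A (c i) • α i) + dd a)
    (hr : 1 ≤ r) (s : ℕ) (ω' : Matrix (Fin r) (Fin r) Ω)
    (h0 : ∀ i j : Fin r, j ≤ i → ω' i j = 0)
    (h1 : ∀ i j : Fin r, (j : ℕ) ≤ (i : ℕ) + s →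
      ∃ c : Fin m → L, ω' i j = ∑ t, algebraMap L A (c t) • α t) :
    ∃ H Hinv : Matrix (Fin r) (Fin r) A,
      H * Hinv = 1 ∧ Hinv * H = 1 ∧ (∀ i, H i i = 1) ∧ (∀ i j, j < i → H i j = 0) ∧
      (∀ i j : Fin r, j ≤ i → gaugeT H Hinv ω' i j = 0) ∧
      (∀ i j : Fin r, (j : ℕ) ≤ (i : ℕ) + (s + 1) →
        ∃ c : Fin m → L, gaugeT H Hinv ω' i j = ∑ t, algebraMap L A (c t) • α t) := by
  classical
  choose cf af haf using hα
  set e := s + 1 with he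
  set N : Matrix (Fin r) (Fin r) A :=
    fun i j => if (j : ℕ) = (i : ℕ) + e then -(af (ω' i j)) else 0 with hN
  have hNsupp : ∀ i j : Fin r, (j : ℕ) ≠ (i : ℕ) + e → N i j = 0 := by
    intro i j h; simp only [hN, if_neg h]
  set H : Matrix (Fin r) (Fin r) A := 1 + N with hH
  set Hinv : Matrix (Fin r) (Fin r) A := ∑ t ∈ Finset.range r, (-N) ^ t with hHinv
  have hNr : N ^ r = 0 := pow_eq_zero_of_diag N e (by omega) hNsupp
  obtain ⟨hHH1, hHH2⟩ := one_add_mul_geom N hNr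
  -- entry facts
  have hH_diag : ∀ i, H i i = 1 := by
    intro i
    simp only [hH, Matrix.add_apply, Matrix.one_apply_eq]
    rw [hNsupp i i (by omega), add_zero]
  have hH_ne : ∀ i j : Fin r, i ≠ j → H i j = N i j := by
    intro i j hij
    simp only [hH, Matrix.add_apply, Matrix.one_apply_ne hij, zero_add]
  have hH_lower : ∀ i j : Fin r, j < i → H i j = 0 := by
    intro i j hij
    rw [hH_ne i j (by exact fun h => absurd h (by rintro rfl; exact lt_irrefl _ hij))]
    exact hNsupp i j (by have := (Fin.lt_def.mp hij); omega)
  have hNegsupp : ∀ i j : Fin r, (j : ℕ) ≠ (i : ℕ) + e → (-N) i j = 0 := by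
    intro i j h; simp [hNsupp i j h]
  have hHinv_diag : ∀ i, Hinv i i = 1 := by
    intro i
    simp only [hHinv, Matrix.sum_apply]
    rw [Finset.sum_eq_single 0]
    · simp [Matrix.one_apply]
    · intro t _ ht
      exact pow_diag_zero (-N) e hNegsupp t i i (by
        have : 1 ≤ t := Nat.one_le_iff_ne_zero.mpr ht
        nlinarith)
    · intro h; exact absurd (Finset.mem_range.mpr (by omega)) h
  have hHinv_zero : ∀ i k : Fin r, k ≠ i → (k : ℕ) < (i : ℕ) + e → Hinv i k = 0 := by
    intro i k hki hlt
    simp only [hHinv, Matrix.sum_apply]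
    apply Finset.sum_eq_zero
    intro t _
    apply pow_diag_zero (-N) e hNegsupp t i k
    rcases Nat.eq_zero_or_pos t with rfl | ht
    · simpa [Fin.val_eq_val] using hki
    · nlinarith
  have hHinv_le : ∀ i k : Fin r, Hinv i k ≠ 0 → (i : ℕ) ≤ (k : ℕ) := by
    intro i k h
    by_contra hc
    exact h (hHinv_zero i k (by rintro rfl; omega) (by omega))
  have hH_le : ∀ l j : Fin r, H l j ≠ 0 → (l : ℕ) ≤ (j : ℕ) := by
    intro l j h
    by_cases hlj : l = j
    · exact le_of_eq (congrArg Fin.val hlj)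
    · rw [hH_ne l j hlj] at h
      by_contra hc
      push_neg at hc
      exact h (hNsupp l j (by omega))
  have hstrict : ∀ i j : Fin r, j ≤ i → gaugeT H Hinv ω' i j = 0 := by
    intro i j hij
    have hij' : (j : ℕ) ≤ (i : ℕ) := hij
    rw [gaugeT_apply]
    have t1 : (∑ k, ∑ l, (Hinv i k * H l j) • ω' k l) = 0 := by
      apply Finset.sum_eq_zero; intro k _
      apply Finset.sum_eq_zero; intro l _
      by_cases hk : Hinv i k = 0
      · rw [hk, zero_mul, zero_smul]
      by_cases hl : H l j = 0
      · rw [hl, mul_zero, zero_smul]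
      have h1' : (i : ℕ) ≤ k := hHinv_le i k hk
      have h2' : (l : ℕ) ≤ j := hH_le l j hl
      rw [h0 k l (by simp only [Fin.le_def]; omega), smul_zero]
    have t2 : (∑ k, Hinv i k • dd (H k j)) = 0 := by
      apply Finset.sum_eq_zero; intro k _
      by_cases hkj : k = j
      · subst hkj; rw [hH_diag, Derivation.map_one_eq_zero, smul_zero]
      by_cases hke : (j : ℕ) = (k : ℕ) + e
      · rw [hHinv_zero i k (by rintro rfl; omega) (by omega), zero_smul]
      · rw [hH_ne k j (Ne.symm (fun h => hkj h.symm)), hNsupp k j hke, map_zero, smul_zero]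
    rw [t1, t2, add_zero]
  refine ⟨H, Hinv, hHH1, hHH2, hH_diag, hH_lower, hstrict, ?_⟩
  · intro i j hj
    by_cases hij : (j : ℕ) ≤ (i : ℕ)
    · refine ⟨0, ?_⟩
      rw [hstrict i j (Fin.le_def.mpr hij)]
      simp
    push_neg at hij
    rw [gaugeT_apply]
    have t1 : (∑ k, ∑ l, (Hinv i k * H l j) • ω' k l) = ω' i j := by
      rw [Finset.sum_eq_single i]
      · rw [Finset.sum_eq_single j]
        · rw [hHinv_diag, hH_diag, one_mul, one_smul]
        · intro l _ hl
          by_cases hlz : H l j = 0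
          · rw [hlz, mul_zero, zero_smul]
          have : (j : ℕ) = (l : ℕ) + e := by
            have := hH_ne l j hl
            rw [this] at hlz
            by_contra hc; exact hlz (hNsupp l j hc)
          rw [h0 i l (by simp only [Fin.le_def]; omega), smul_zero]
        · simp
      · intro k _ hk
        apply Finset.sum_eq_zero; intro l _
        by_cases hkz : Hinv i k = 0
        · rw [hkz, zero_mul, zero_smul]
        by_cases hlz : H l j = 0
        · rw [hlz, mul_zero, zero_smul]
        have h1' : (i : ℕ) ≤ k := hHinv_le i k hkz
        have h1'' : (k : ℕ) ≠ (i : ℕ) := by simpa [Fin.val_eq_val] using hk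
        have h1''' : (i : ℕ) + e ≤ (k : ℕ) := by
          by_contra hc; exact hkz (hHinv_zero i k hk (by omega))
        have h2' : (l : ℕ) ≤ j := hH_le l j hlz
        rw [h0 k l (by simp only [Fin.le_def]; omega), smul_zero]
      · simp
    rw [t1]
    by_cases hje : (j : ℕ) = (i : ℕ) + e
    · -- diagonal e : kill the exact part
      have t2 : (∑ k, Hinv i k • dd (H k j)) = dd (N i j) := by
        rw [Finset.sum_eq_single i]
        · rw [hHinv_diag, one_smul, hH_ne i j (by rintro rfl; omega)]
        · intro k _ hk
          by_cases hkj : k = j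
          · subst hkj; rw [hH_diag, Derivation.map_one_eq_zero, smul_zero]
          by_cases hke : (j : ℕ) = (k : ℕ) + e
          · exact absurd (Fin.ext (by omega) : k = i) hk
          · rw [hH_ne k j (Ne.symm (fun h => hkj h.symm)), hNsupp k j hke, map_zero, smul_zero]
        · simp
      rw [t2]
      refine ⟨cf (ω' i j), ?_⟩
      have : N i j = -(af (ω' i j)) := by simp only [hN, if_pos hje]
      rw [this, map_neg]
      nth_rewrite 1 [haf (ω' i j)]
      abel
    · -- below diagonal e : nothing changes
      have t2 : (∑ k, Hinv i k • dd (H k j)) = 0 := by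
        apply Finset.sum_eq_zero; intro k _
        by_cases hkj : k = j
        · subst hkj; rw [hH_diag, Derivation.map_one_eq_zero, smul_zero]
        by_cases hke : (j : ℕ) = (k : ℕ) + e
        · rw [hHinv_zero i k (by rintro rfl; omega) (by omega), zero_smul]
        · rw [hH_ne k j (Ne.symm (fun h => hkj h.symm)), hNsupp k j hke, map_zero, smul_zero]
      rw [t2, add_zero]
      exact h1 i j (by omega)


lemma main_induction (m : ℕ) (α : Fin m → Ω)
    (hα : ∀ ω : Ω, ∃ c : Fin m → L, ∃ a : A,
      ω = (∑ i, algebraMap L A (c i) • α i) + dd a)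
    (hr : 1 ≤ r) (ω : Matrix (Fin r) (Fin r) Ω)
    (hω : ∀ i j : Fin r, j ≤ i → ω i j = 0) (s : ℕ) :
    ∃ G Ginv : Matrix (Fin r) (Fin r) A,
      G * Ginv = 1 ∧ Ginv * G = 1 ∧ (∀ i, G i i = 1) ∧ (∀ i j, j < i → G i j = 0) ∧
      (∀ i j : Fin r, j ≤ i → gaugeT G Ginv ω i j = 0) ∧
      (∀ i j : Fin r, (j : ℕ) ≤ (i : ℕ) + s →
        ∃ c : Fin m → L, gaugeT G Ginv ω i j = ∑ t, algebraMap L A (c t) • α t) := by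
  induction s with
  | zero =>
    refine ⟨1, 1, one_mul 1, one_mul 1, fun i => Matrix.one_apply_eq i,
      fun i j hij => Matrix.one_apply_ne (Ne.symm (ne_of_lt hij)), ?_, ?_⟩
    · intro i j hij; rw [gaugeT_one]; exact hω i j hij
    · intro i j hij
      refine ⟨0, ?_⟩
      rw [gaugeT_one, hω i j (Fin.le_def.mpr (by omega))]
      simp
  | succ s ih =>
    obtain ⟨G, Ginv, hGG, hGG', hGd, hGl, hstrict, hspan⟩ := ih
    obtain ⟨H, Hinv, hHH, hHH', hHd, hHl, hstrict', hspan'⟩ :=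
      step_lemma m α hα hr s (gaugeT G Ginv ω) hstrict hspan
    refine ⟨G * H, Hinv * Ginv, ?_, ?_, ?_, ?_, ?_, ?_⟩
    · rw [Matrix.mul_assoc, ← Matrix.mul_assoc H Hinv Ginv, hHH, Matrix.one_mul, hGG]
    · rw [Matrix.mul_assoc, ← Matrix.mul_assoc Ginv G H, hGG', Matrix.one_mul, hHH']
    · exact unip_mul_diag G H hGd hGl hHd hHl
    · exact unip_mul_lower G H hGl hHl
    · intro i j hij
      rw [gaugeT_comp G Ginv H Hinv hGG' ω]
      exact hstrict' i j hij
    · intro i j hij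
      rw [gaugeT_comp G Ginv H Hinv hGG' ω]
      exact hspan' i j hij

end Aux3

/-- Gauge transformation lemma (Lemma 2 of the paper). Let `L` be a field of
characteristic zero, `A` a commutative `L`-algebra, `Ω = Ω_{A/L}` with universal
derivation `d`. Suppose every `ω ∈ Ω` is an `L`-linear combination of `α_1, …, α_m`
plus an exact form. Then for every `r ≥ 1` and every strictly upper-triangular `r×r`
matrix `ω` over `Ω`, there is an upper-triangular unipotent matrix `G ∈ GL_r(A)` such
that `G⁻¹ωG + G⁻¹dG` is strictly upper-triangular with entries in the `L`-span of the
`α_i`. -/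
theorem stmt8 (L A : Type*) [Field L] [CharZero L] [CommRing A] [Algebra L A]
    (m : ℕ) (α : Fin m → KaehlerDifferential L A)
    (hα : ∀ ω : KaehlerDifferential L A, ∃ c : Fin m → L, ∃ a : A,
      ω = (∑ i, algebraMap L A (c i) • α i) + KaehlerDifferential.D L A a)
    (r : ℕ) (hr : 1 ≤ r)
    (ω : Matrix (Fin r) (Fin r) (KaehlerDifferential L A))
    (hω : ∀ i j : Fin r, j ≤ i → ω i j = 0) :
    ∃ G Ginv : Matrix (Fin r) (Fin r) A,
      G * Ginv = 1 ∧ Ginv * G = 1 ∧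
      (∀ i : Fin r, G i i = 1) ∧ (∀ i j : Fin r, j < i → G i j = 0) ∧
      (∀ i j : Fin r, j ≤ i →
        (∑ k, ∑ l, (Ginv i k * G l j) • ω k l) +
          (∑ k, Ginv i k • KaehlerDifferential.D L A (G k j)) = 0) ∧
      (∀ i j : Fin r, ∃ c : Fin m → L,
        (∑ k, ∑ l, (Ginv i k * G l j) • ω k l) +
          (∑ k, Ginv i k • KaehlerDifferential.D L A (G k j)) =
        ∑ t, algebraMap L A (c t) • α t) := by
  obtain ⟨G, Ginv, h1, h2, h3, h4, h5, h6⟩ := main_induction m α hα hr ω hω r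
  refine ⟨G, Ginv, h1, h2, h3, h4, ?_, ?_⟩
  · intro i j hij
    rw [← gaugeT_apply]
    exact h5 i j hij
  · intro i j
    obtain ⟨c, hc⟩ := h6 i j (by omega)
    exact ⟨c, by rw [← gaugeT_apply]; exact hc⟩
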